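/- In the Ribaucour setup (f, ξ orthonormal, f̌ ⊥ f,ξ with (f̌,f̌)=μ², a = 1-2/(τ²+μ²+1), f̂ = a f + τ(a-1) ξ + (1-a) f̌, ξ̂ = ξ - τ f + τ f̂), define f̌̂ := f̌ + μ²(f - f̂). Then f̌̂ is orthogonal to both f̂ and ξ̂, and (f̌̂, f̌̂) = μ², i.e., f̌̂ has the same squared length μ² as f̌. -/

import Mathlib

open RealInnerProductSpace

/-- `f̌̂ := f̌ + μ²(f - f̂)` is orthogonal to `f̂` and `ξ̂`, and has the same
squared length `μ²` as `f̌`. -/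
theorem ribaucour_fcheckhat {V : Type*} [NormedAddCommGroup V] [InnerProductSpace ℝ V]
    (f ξ fc : V) (τ : ℝ)
    (hf : ⟪f, f⟫ = 1) (hξ : ⟪ξ, ξ⟫ = 1) (hfξ : ⟪f, ξ⟫ = 0)
    (hcf : ⟪fc, f⟫ = 0) (hcξ : ⟪fc, ξ⟫ = 0)
    (μ2 : ℝ) (hμ2 : μ2 = ⟪fc, fc⟫)
    (a : ℝ) (ha : a = 1 - 2 / (τ ^ 2 + μ2 + 1))
    (fh : V) (hfh : fh = a • f + (τ * (a - 1)) • ξ + (1 - a) • fc)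
    (ξh : V) (hξh : ξh = ξ - τ • f + τ • fh)
    (fch : V) (hfch : fch = fc + μ2 • (f - fh)) :
    ⟪fch, fh⟫ = 0 ∧ ⟪fch, ξh⟫ = 0 ∧ ⟪fch, fch⟫ = μ2 := by
  have hμnn : 0 ≤ μ2 := hμ2 ▸ real_inner_self_nonneg
  have hden : τ ^ 2 + μ2 + 1 ≠ 0 := by positivity
  have hfc : ⟪f, fc⟫ = 0 := by rw [real_inner_comm]; exact hcf
  have hξc : ⟪ξ, fc⟫ = 0 := by rw [real_inner_comm]; exact hcξ
  have hξf : ⟪ξ, f⟫ = 0 := by rw [real_inner_comm]; exact hfξ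
  subst hfch hξh hfh ha hμ2
  simp only [inner_add_left, inner_add_right, inner_sub_left, inner_sub_right,
    inner_smul_left, inner_smul_right, hf, hξ, hfξ, hcf, hcξ, hfc, hξc, hξf,
    RCLike.ofReal_real_eq_id, id_eq, conj_trivial]
  refine ⟨?_, ?_, ?_⟩ <;> field_simp <;> ring
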